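/- Let ψ₂(x) = (x−1)/(x+1). For probability densities s, q, q' with respect to μ, ∫ ψ₂(√(q'/q)) s dμ ≤ 4 h²(s,q) − (3/8) h²(s,q'). -/

import Mathlib

open MeasureTheory

/-- The squared Hellinger distance between the probability measures with
densities `a` and `b` with respect to `μ`. -/
noncomputable def H2 {α : Type*} [MeasurableSpace α] (μ : Measure α) (a b : α → ℝ) : ℝ :=
  (1 / 2) * ∫ x, (Real.sqrt (a x) - Real.sqrt (b x)) ^ 2 ∂μ

/-- `ψ₂(√(q'/q))` evaluated with the conventions `0/0 = 1` (giving `ψ₂(1) = 0`)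
and `a/0 = +∞` for `a > 0` (giving `ψ₂(+∞) = 1`), where `ψ₂(x) = (x-1)/(x+1)`. -/
noncomputable def psi2Ratio {α : Type*} (q q' : α → ℝ) (x : α) : ℝ :=
  if q x = 0 then (if q' x = 0 then 0 else 1)
  else (Real.sqrt (q' x / q x) - 1) / (Real.sqrt (q' x / q x) + 1)

lemma key_poly (t u v : ℝ) (ht : 0 ≤ t) (hu : 0 ≤ u) (hv : 0 ≤ v) :
    (v - u) * t ^ 2 ≤
      (29/16 * t ^ 2 + 7/4 * u ^ 2 + 1/16 * v ^ 2 - 4 * (t * u) + 3/8 * (t * v)) * (u + v) := by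
  nlinarith [sq_nonneg (t-u), sq_nonneg (t-v), sq_nonneg (u-v),
    mul_nonneg hu (sq_nonneg (t-u)), mul_nonneg hv (sq_nonneg (t-u)),
    mul_nonneg hu (sq_nonneg (t-v)), mul_nonneg hv (sq_nonneg (t-v)),
    mul_nonneg ht (sq_nonneg (u-v)), mul_nonneg hu (sq_nonneg (u-v)),
    mul_nonneg hv (sq_nonneg (u-v)), mul_nonneg ht (sq_nonneg (t-u)),
    mul_nonneg ht (sq_nonneg (t-v)), mul_nonneg (mul_nonneg ht hu) hv]

lemma pointwise_bound (a b c : ℝ) (ha : 0 ≤ a) (hb : 0 ≤ b) (hc : 0 ≤ c) :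
    (if b = 0 then (if c = 0 then (0:ℝ) else 1)
      else (Real.sqrt (c / b) - 1) / (Real.sqrt (c / b) + 1)) * a ≤
    29/16 * a + 7/4 * b + 1/16 * c - 4 * (Real.sqrt a * Real.sqrt b)
      + 3/8 * (Real.sqrt a * Real.sqrt c) := by
  set t := Real.sqrt a with htdef
  set u := Real.sqrt b with hudef
  set v := Real.sqrt c with hvdef
  have ht : 0 ≤ t := Real.sqrt_nonneg a
  have hu : 0 ≤ u := Real.sqrt_nonneg b
  have hv : 0 ≤ v := Real.sqrt_nonneg c
  have ht2 : t ^ 2 = a := Real.sq_sqrt ha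
  have hu2 : u ^ 2 = b := Real.sq_sqrt hb
  have hv2 : v ^ 2 = c := Real.sq_sqrt hc
  by_cases hb0 : b = 0
  · have hu0 : u = 0 := by rw [hudef, hb0, Real.sqrt_zero]
    by_cases hc0 : c = 0
    · have hv0 : v = 0 := by rw [hvdef, hc0, Real.sqrt_zero]
      rw [if_pos hb0, if_pos hc0, hb0, hc0, hu0, hv0]
      nlinarith
    · rw [if_pos hb0, if_neg hc0, hb0, hu0]
      nlinarith [mul_nonneg ht hv]
  · have hbpos : 0 < b := lt_of_le_of_ne hb (Ne.symm hb0)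
    have hupos : 0 < u := Real.sqrt_pos.mpr hbpos
    have hsd : Real.sqrt (c / b) = v / u := Real.sqrt_div hc b
    rw [if_neg hb0, hsd]
    have huv : 0 < u + v := by linarith
    have hratio : (v / u - 1) / (v / u + 1) = (v - u) / (u + v) := by
      rw [div_sub' (ne_of_gt hupos), div_add' _ _ _ (ne_of_gt hupos),
        div_div_div_cancel_right₀]
      · ring_nf
      · exact ne_of_gt hupos
    rw [hratio, div_mul_eq_mul_div, div_le_iff₀ huv]
    have := key_poly t u v ht hu hv
    nlinarith [this]

lemma psi2Ratio_abs_le {α : Type*} (q q' : α → ℝ) (hq'0 : ∀ x, 0 ≤ q' x) (x : α) :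
    |psi2Ratio q q' x| ≤ 1 := by
  unfold psi2Ratio
  by_cases hb : q x = 0
  · by_cases hc : q' x = 0 <;> simp [hb, hc]
  · rw [if_neg hb]
    have hw : 0 ≤ Real.sqrt (q' x / q x) := Real.sqrt_nonneg _
    rw [abs_div, abs_of_pos (by linarith : (0:ℝ) < Real.sqrt (q' x / q x) + 1),
      div_le_one (by linarith)]
    rw [abs_le]; constructor <;> linarith

theorem stmt12 {α : Type*} [MeasurableSpace α] (μ : Measure α) (s q q' : α → ℝ)
    (hs : Measurable s) (hq : Measurable q) (hq' : Measurable q')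
    (hs0 : ∀ x, 0 ≤ s x) (hq0 : ∀ x, 0 ≤ q x) (hq'0 : ∀ x, 0 ≤ q' x)
    (hsint : ∫ x, s x ∂μ = 1) (hqint : ∫ x, q x ∂μ = 1) (hq'int : ∫ x, q' x ∂μ = 1) :
    ∫ x, psi2Ratio q q' x * s x ∂μ ≤ 4 * H2 μ s q - (3 / 8) * H2 μ s q' := by
  -- integrability of the densities
  have hsI : Integrable s μ := by
    by_contra h; rw [integral_undef h] at hsint; norm_num at hsint
  have hqI : Integrable q μ := by
    by_contra h; rw [integral_undef h] at hqint; norm_num at hqint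
  have hq'I : Integrable q' μ := by
    by_contra h; rw [integral_undef h] at hq'int; norm_num at hq'int
  have msqrt : Measurable (Real.sqrt) := Real.continuous_sqrt.measurable
  -- integrability of the geometric-mean terms
  have hmean : ∀ (f g : α → ℝ), Measurable f → Measurable g → (∀ x, 0 ≤ f x) →
      (∀ x, 0 ≤ g x) → Integrable f μ → Integrable g μ →
      Integrable (fun x => Real.sqrt (f x) * Real.sqrt (g x)) μ := by
    intro f g hf hg hf0 hg0 hfI hgI
    have hb : Integrable (fun x => 1/2 * (f x + g x)) μ := (hfI.add hgI).const_mul (1/2)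
    apply Integrable.mono' hb
      (((msqrt.comp hf).mul (msqrt.comp hg)).aestronglyMeasurable)
    filter_upwards with x
    show |Real.sqrt (f x) * Real.sqrt (g x)| ≤ 1/2 * (f x + g x)
    rw [abs_of_nonneg (mul_nonneg (Real.sqrt_nonneg _) (Real.sqrt_nonneg _))]
    have h1 : Real.sqrt (f x) ^ 2 = f x := Real.sq_sqrt (hf0 x)
    have h2 : Real.sqrt (g x) ^ 2 = g x := Real.sq_sqrt (hg0 x)
    nlinarith [sq_nonneg (Real.sqrt (f x) - Real.sqrt (g x))]
  have hI1 : Integrable (fun x => Real.sqrt (s x) * Real.sqrt (q x)) μ :=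
    hmean s q hs hq hs0 hq0 hsI hqI
  have hI2 : Integrable (fun x => Real.sqrt (s x) * Real.sqrt (q' x)) μ :=
    hmean s q' hs hq' hs0 hq'0 hsI hq'I
  -- measurability of psi2Ratio
  have hpsim : Measurable (psi2Ratio q q') := by
    unfold psi2Ratio
    have h1 : MeasurableSet {x | q x = 0} := hq (measurableSet_singleton 0)
    have h2 : MeasurableSet {x | q' x = 0} := hq' (measurableSet_singleton 0)
    exact Measurable.ite h1 (Measurable.ite h2 measurable_const measurable_const)
      (((msqrt.comp (hq'.div hq)).sub measurable_const).div
        ((msqrt.comp (hq'.div hq)).add measurable_const))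
  -- integrability of psi2Ratio * s
  have hpsiI : Integrable (fun x => psi2Ratio q q' x * s x) μ := by
    apply Integrable.mono' hsI ((hpsim.mul hs).aestronglyMeasurable)
    filter_upwards with x
    rw [Real.norm_eq_abs, Pi.mul_apply, abs_mul, abs_of_nonneg (hs0 x)]
    have := psi2Ratio_abs_le q q' hq'0 x
    nlinarith [hs0 x, abs_nonneg (psi2Ratio q q' x)]
  -- H2 values
  have hH2 : ∀ (g : α → ℝ), Measurable g → (∀ x, 0 ≤ g x) → Integrable g μ →
      (∫ x, g x ∂μ) = 1 → Integrable (fun x => Real.sqrt (s x) * Real.sqrt (g x)) μ →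
      H2 μ s g = 1 - ∫ x, Real.sqrt (s x) * Real.sqrt (g x) ∂μ := by
    intro g hg hg0 hgI hgint hIg
    unfold H2
    have hcongr : ∀ x, (Real.sqrt (s x) - Real.sqrt (g x)) ^ 2
        = s x + g x - 2 * (Real.sqrt (s x) * Real.sqrt (g x)) := by
      intro x
      have h1 : Real.sqrt (s x) ^ 2 = s x := Real.sq_sqrt (hs0 x)
      have h2 : Real.sqrt (g x) ^ 2 = g x := Real.sq_sqrt (hg0 x)
      nlinarith
    rw [integral_congr_ae (Filter.Eventually.of_forall hcongr)]
    have hadd : Integrable (fun a => s a + g a) μ := hsI.add hgI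
    have hc2 : Integrable (fun a => 2 * (Real.sqrt (s a) * Real.sqrt (g a))) μ :=
      hIg.const_mul 2
    rw [integral_sub hadd hc2, integral_add hsI hgI, integral_const_mul, hsint, hgint]
    ring
  have hH2q := hH2 q hq hq0 hqI hqint hI1
  have hH2q' := hH2 q' hq' hq'0 hq'I hq'int hI2
  -- the pointwise comparison and the integral of the bound
  set f1 : α → ℝ := fun x => Real.sqrt (s x) * Real.sqrt (q x) with hf1
  set f2 : α → ℝ := fun x => Real.sqrt (s x) * Real.sqrt (q' x) with hf2
  have hgI : Integrable (fun x => 29/16 * s x + 7/4 * q x + 1/16 * q' x - 4 * f1 x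
      + 3/8 * f2 x) μ :=
    ((((hsI.const_mul _).add (hqI.const_mul _)).add (hq'I.const_mul _)).sub
      (hI1.const_mul _)).add (hI2.const_mul _)
  have hmono : ∫ x, psi2Ratio q q' x * s x ∂μ ≤
      ∫ x, (29/16 * s x + 7/4 * q x + 1/16 * q' x - 4 * f1 x + 3/8 * f2 x) ∂μ := by
    apply integral_mono hpsiI hgI
    intro x
    exact pointwise_bound (s x) (q x) (q' x) (hs0 x) (hq0 x) (hq'0 x)
  have hA : Integrable (fun x => 29/16 * s x) μ := hsI.const_mul _
  have hB : Integrable (fun x => 7/4 * q x) μ := hqI.const_mul _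
  have hC : Integrable (fun x => 1/16 * q' x) μ := hq'I.const_mul _
  have hD : Integrable (fun x => 4 * f1 x) μ := hI1.const_mul _
  have hE : Integrable (fun x => 3/8 * f2 x) μ := hI2.const_mul _
  have hAB : Integrable (fun x => 29/16 * s x + 7/4 * q x) μ := hA.add hB
  have hABC : Integrable (fun x => 29/16 * s x + 7/4 * q x + 1/16 * q' x) μ := hAB.add hC
  have hABCD : Integrable (fun x => 29/16 * s x + 7/4 * q x + 1/16 * q' x - 4 * f1 x) μ :=
    hABC.sub hD
  have hval : ∫ x, (29/16 * s x + 7/4 * q x + 1/16 * q' x - 4 * f1 x + 3/8 * f2 x) ∂μ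
      = 29/16 + 7/4 + 1/16 - 4 * (∫ x, f1 x ∂μ) + 3/8 * (∫ x, f2 x ∂μ) := by
    rw [integral_add hABCD hE, integral_sub hABC hD, integral_add hAB hC, integral_add hA hB,
      integral_const_mul, integral_const_mul, integral_const_mul, integral_const_mul,
      integral_const_mul, hsint, hqint, hq'int]
    ring
  rw [hval] at hmono
  rw [hH2q, hH2q']
  linarith
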